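/- Let T be a finite simple graph on a vertex set V that is a tree (connected and acyclic). Suppose given numbers p : V → ℝ with 0 ≤ p i ≤ 1 for all i, and numbers q assigned to each edge {i,j} of T with max(0, p i + p j − 1) ≤ q {i,j} ≤ min(p i, p j). Then there exists a probability measure μ on the space of functions V → Bool such that for every vertex i, μ({f | f i = true}) = p i, and for every edge {i,j} of T, μ({f | f i = true ∧ f j = true}) = q {i,j}. -/

import Mathlib

open MeasureTheory Finset SimpleGraph

namespace TreeProof
variable {V : Type*}

lemma exists_leaf [Fintype V] (T : SimpleGraph V) [DecidableRel T.Adj] (hT : T.IsTree)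
    (h2 : 2 ≤ Fintype.card V) : ∃ l, T.degree l = 1 := by
  classical
  by_contra hcon
  push_neg at hcon
  have hge : ∀ v, 2 ≤ T.degree v := by
    intro v
    have hpos : 0 < T.degree v := by
      rw [SimpleGraph.degree_pos_iff_exists_adj]
      obtain ⟨u, hu⟩ := Fintype.exists_ne_of_one_lt_card (by omega) v
      obtain ⟨w⟩ := hT.isConnected.preconnected v u
      cases w with
      | nil => exact absurd rfl hu
      | cons h _ => exact ⟨_, h⟩
    have := hcon v; omega
  have hsum := T.sum_degrees_eq_twice_card_edges
  have hcard := hT.card_edgeFinset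
  have hle : 2 * Fintype.card V ≤ ∑ v, T.degree v := by
    calc 2 * Fintype.card V = ∑ _v : V, 2 := by simp [mul_comm]
    _ ≤ _ := Finset.sum_le_sum fun v _ => hge v
  omega

variable {V : Type*} {T : SimpleGraph V}

lemma walk_head_adj : ∀ {a b : V} (w : T.Walk a b), a ≠ b →
    ∃ c, T.Adj a c ∧ c ∈ w.support.tail := by
  intro a b w
  cases w with
  | nil => intro h; exact absurd rfl h
  | cons h q => intro _; exact ⟨_, h, by simp [q.start_mem_support]⟩

lemma path_avoids_leaf [DecidableEq V] {l m u v : V} (hm : ∀ x, T.Adj l x → x = m)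
    (hu : u ≠ l) (hv : v ≠ l) (p : T.Walk u v) (hp : p.IsPath) : l ∉ p.support := by
  intro hl
  have hspec := p.take_spec hl
  have hnodup := hp.support_nodup
  rw [← hspec, SimpleGraph.Walk.support_append] at hnodup
  rw [List.nodup_append] at hnodup
  obtain ⟨-, -, hdisj⟩ := hnodup
  -- m in tail of dropUntil support
  obtain ⟨c, hc, hcm⟩ := walk_head_adj (p.dropUntil l hl) (Ne.symm hv)
  rw [hm c hc] at hcm
  -- m in takeUntil support
  obtain ⟨c', hc', hcm'⟩ := walk_head_adj (p.takeUntil l hl).reverse (Ne.symm hu)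
  rw [hm c' hc'] at hcm'
  have hmem : m ∈ (p.takeUntil l hl).support := by
    have := List.mem_of_mem_tail hcm'
    rwa [SimpleGraph.Walk.support_reverse, List.mem_reverse] at this
  exact hdisj m hmem m hcm rfl

lemma reach_transfer {l : V} : ∀ {u v : V} (p : T.Walk u v), l ∉ p.support →
    ∀ (hu : u ≠ l) (hv : v ≠ l),
    (T.comap (Subtype.val : {x : V // x ≠ l} → V)).Reachable ⟨u, hu⟩ ⟨v, hv⟩ := by
  intro u v p
  induction p with
  | nil => intro _ hu hv; exact Reachable.refl _
  | @cons a x b h q ih =>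
    intro hp hu hv
    have hx : x ≠ l := by
      intro hxl
      exact hp (by rw [SimpleGraph.Walk.support_cons]; exact List.mem_cons_of_mem _ (hxl ▸ q.start_mem_support))
    have hl : l ∉ q.support := fun hh => hp (by rw [SimpleGraph.Walk.support_cons]; exact List.mem_cons_of_mem _ hh)
    have hadj : (T.comap (Subtype.val : {x : V // x ≠ l} → V)).Adj ⟨a, hu⟩ ⟨x, hx⟩ := h
    exact Reachable.trans hadj.reachable (ih hl hx hv)

lemma tree_minus_leaf [Fintype V] [DecidableEq V] (hT : T.IsTree) (l m : V) (hm : ∀ x, T.Adj l x → x = m)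
    (h2 : 2 ≤ Fintype.card V) :
    (T.comap (Subtype.val : {x : V // x ≠ l} → V)).IsTree := by
  classical
  rw [isTree_iff_existsUnique_path]
  constructor
  · obtain ⟨u, hu⟩ := Fintype.exists_ne_of_one_lt_card (by omega) l
    exact ⟨⟨u, hu⟩⟩
  · intro u v
    obtain ⟨p, hp, hpu⟩ := hT.existsUnique_path u.val v.val
    have hl : l ∉ p.support := path_avoids_leaf hm u.prop v.prop p hp
    obtain ⟨w⟩ := reach_transfer p hl u.prop v.prop
    have hval : Function.Injective (Subtype.val : {x : V // x ≠ l} → V) := Subtype.val_injective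
    refine ⟨w.toPath.val, w.toPath.prop, ?_⟩
    intro y hy
    have h1 : (y.map (SimpleGraph.Hom.comap Subtype.val T)).IsPath :=
      SimpleGraph.Walk.map_isPath_of_injective hval hy
    have h2' : ((w.toPath.val).map (SimpleGraph.Hom.comap Subtype.val T)).IsPath :=
      SimpleGraph.Walk.map_isPath_of_injective hval w.toPath.prop
    have := (hpu _ h1).trans (hpu _ h2').symm
    exact SimpleGraph.Walk.map_injective_of_injective hval u v this


universe u

lemma key : ∀ (n : ℕ) (V : Type u) [Fintype V] [DecidableEq V] (T : SimpleGraph V),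
    Fintype.card V = n → T.IsTree →
    ∀ (p : V → ℝ), (∀ i, 0 ≤ p i ∧ p i ≤ 1) →
    ∀ (q : Sym2 V → ℝ),
    (∀ i j, T.Adj i j → max 0 (p i + p j - 1) ≤ q s(i, j) ∧ q s(i, j) ≤ min (p i) (p j)) →
    ∃ w : (V → Bool) → ℝ, (∀ f, 0 ≤ w f) ∧ (∑ f, w f = 1) ∧
      (∀ i, ∑ f ∈ univ.filter (fun f => f i = true), w f = p i) ∧
      (∀ i j, T.Adj i j →
        ∑ f ∈ univ.filter (fun f => f i = true ∧ f j = true), w f = q s(i, j)) := by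
  intro n
  induction n using Nat.strong_induction_on with
  | _ n ih =>
  intro V _ _ T hn hT p hp q hq
  classical
  match n, hn with
  | 0, hn =>
    obtain ⟨v⟩ := hT.isConnected.nonempty
    have : 0 < Fintype.card V := Fintype.card_pos_iff.mpr ⟨v⟩
    omega
  | 1, hn =>
    obtain ⟨i0, hi0⟩ := Fintype.card_eq_one_iff.mp hn
    set e : (V → Bool) ≃ Bool :=
      { toFun := fun f => f i0
        invFun := fun b _ => b
        left_inv := fun f => funext fun j => (congrArg f (hi0 j)).symm
        right_inv := fun b => rfl } with he
    refine ⟨fun f => if f i0 then p i0 else 1 - p i0, ?_, ?_, ?_, ?_⟩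
    · intro f
      by_cases h : f i0 <;> simp [h] <;> linarith [(hp i0).1, (hp i0).2]
    · rw [← Equiv.sum_comp e.symm]
      simp [he]
    · intro i
      rw [hi0 i, Finset.sum_filter, ← Equiv.sum_comp e.symm]
      simp [he]
    · intro i j hadj
      rw [hi0 i, hi0 j] at hadj
      exact absurd hadj (T.irrefl)
  | (k+2), hn =>
    have h2 : 2 ≤ Fintype.card V := by omega
    letI : DecidableRel T.Adj := Classical.decRel _
    obtain ⟨l, hl⟩ := exists_leaf T hT h2
    obtain ⟨m, hm⟩ := Finset.card_eq_one.mp hl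
    have hadjm : T.Adj l m := by
      rw [← SimpleGraph.mem_neighborFinset, hm]; exact Finset.mem_singleton_self m
    have huniq : ∀ x, T.Adj l x → x = m := by
      intro x hx
      have := (T.mem_neighborFinset l x).mpr hx
      rw [hm] at this
      exact Finset.mem_singleton.mp this
    have hml : m ≠ l := fun h => T.irrefl (h ▸ hadjm)
    set V' := {x : V // x ≠ l} with hV'
    set T' : SimpleGraph V' := T.comap (Subtype.val) with hT'def
    have hT' : T'.IsTree := tree_minus_leaf hT l m huniq h2
    have hcard' : Fintype.card V' = k + 1 := by
      have : Fintype.card V' = Fintype.card V - Fintype.card {x : V // x = l} :=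
        Fintype.card_subtype_compl _
      rw [this, Fintype.card_subtype_eq l]
      omega
    set p' : V' → ℝ := fun x => p x.val with hp'def
    set q' : Sym2 V' → ℝ := fun e => q (e.map Subtype.val) with hq'def
    have hp' : ∀ i, 0 ≤ p' i ∧ p' i ≤ 1 := fun i => hp i.val
    have hq' : ∀ i j, T'.Adj i j →
        max 0 (p' i + p' j - 1) ≤ q' s(i, j) ∧ q' s(i, j) ≤ min (p' i) (p' j) := by
      intro i j hadj
      have : q' s(i, j) = q s(i.val, j.val) := by rw [hq'def]; simp [Sym2.map_pair_eq]
      rw [this]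
      exact hq i.val j.val hadj
    obtain ⟨w', hw0, hw1, hwv, hwe⟩ := ih (k+1) (by omega) V' T' hcard' hT' p' hp' q' hq'
    have hqe := hq m l hadjm.symm
    rw [max_le_iff] at *
    obtain ⟨⟨hqe0, hqe1⟩, hqe2⟩ := hqe
    rw [le_min_iff] at hqe2
    obtain ⟨hqe2, hqe3⟩ := hqe2
    obtain ⟨hpm0, hpm1⟩ := hp m
    obtain ⟨hpl0, hpl1⟩ := hp l
    set qe : ℝ := q s(m, l) with hqedef
    set r : Bool → Bool → ℝ := fun b c =>
      if b then (if c then qe else p m - qe) else (if c then p l - qe else 1 - p m - p l + qe)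
      with hrdef
    set marg : Bool → ℝ := fun b => if b then p m else 1 - p m with hmargdef
    set kk : Bool → Bool → ℝ := fun b c =>
      if marg b = 0 then (if c then p l else 1 - p l) else r b c / marg b with hkdef
    have hr0 : ∀ b c, 0 ≤ r b c := by
      intro b c
      rcases b <;> rcases c <;> simp [hrdef] <;> linarith
    have hmarg0 : ∀ b, 0 ≤ marg b := by
      intro b; rcases b <;> simp [hmargdef] <;> linarith
    have hrsum : ∀ b, r b true + r b false = marg b := by
      intro b; rcases b <;> simp [hrdef, hmargdef]
    have hk0 : ∀ b c, 0 ≤ kk b c := by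
      intro b c
      simp only [hkdef]
      split
      · rcases c <;> simp <;> linarith
      · exact div_nonneg (hr0 b c) (hmarg0 b)
    have hksum : ∀ b, kk b true + kk b false = 1 := by
      intro b
      simp only [hkdef]
      split
      · simp
      · rw [← add_div, hrsum]
        exact div_self ‹marg b ≠ 0›
    have hmk : ∀ b c, marg b * kk b c = r b c := by
      intro b c
      simp only [hkdef]
      split
      · rename_i h0
        rw [h0, zero_mul]
        have h1 := hrsum b
        rw [h0] at h1
        have h2 := hr0 b true
        have h3 := hr0 b false
        rcases c <;> linarith
      · rw [mul_div_cancel₀ _ ‹marg b ≠ 0›]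
    set m' : V' := ⟨m, hml⟩ with hm'def
    set e : ((V' → Bool) × Bool) ≃ (V → Bool) :=
      { toFun := fun x v => if h : v = l then x.2 else x.1 ⟨v, h⟩
        invFun := fun f => (fun v' => f v'.val, f l)
        left_inv := by
          rintro ⟨g, b⟩
          refine Prod.ext (funext fun v' => ?_) ?_
          · simp [dif_neg v'.prop]
          · simp
        right_inv := by
          intro f
          funext v
          by_cases h : v = l
          · subst h; simp
          · simp [dif_neg h] } with hedef
    have heval : ∀ (g : V' → Bool) (b : Bool) (v : V) (h : v ≠ l), e (g, b) v = g ⟨v, h⟩ := by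
      intro g b v h; simp [hedef, dif_neg h]
    have hevall : ∀ (g : V' → Bool) (b : Bool), e (g, b) l = b := by
      intro g b; simp [hedef]
    set w : (V → Bool) → ℝ := fun f => w' (fun v' => f v'.val) * kk (f m) (f l) with hwdef
    have hweval : ∀ (g : V' → Bool) (b : Bool), w (e (g, b)) = w' g * kk (g m') b := by
      intro g b
      have h1 : (fun v' : V' => e (g, b) v'.val) = g := funext fun v' => heval g b v'.val v'.prop
      simp only [hwdef]
      rw [h1, heval g b m hml, hevall]
    have hsum : ∀ F : (V → Bool) → ℝ, ∑ f, F f = ∑ g : V' → Bool, ∑ b : Bool, F (e (g, b)) := by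
      intro F
      rw [← Equiv.sum_comp e F, Fintype.sum_prod_type]
    have hmargT : marg true = p m := by simp [hmargdef]
    have hmargF : marg false = 1 - p m := by simp [hmargdef]
    have tT : ∀ c, p m * kk true c = r true c := fun c => hmargT ▸ hmk true c
    have tF : ∀ c, (1 - p m) * kk false c = r false c := fun c => hmargF ▸ hmk false c
    have S1 : ∑ g ∈ univ.filter (fun g : V' → Bool => g m' = true), w' g = p m := hwv m'
    have S0 : ∑ g ∈ univ.filter (fun g : V' → Bool => ¬(g m' = true)), w' g = 1 - p m := by
      have := Finset.sum_filter_add_sum_filter_not univ (fun g : V' → Bool => g m' = true) w'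
      rw [hw1] at this
      linarith [S1]
    have hone : ∀ g : V' → Bool, ∑ b, w' g * kk (g m') b = w' g := by
      intro g
      rw [Fintype.sum_bool, ← mul_add, hksum, mul_one]
    have rTT : r true true = qe := by simp [hrdef]
    have rFT : r false true = p l - qe := by simp [hrdef]
    have htot : ∑ f, w f = 1 := by
      rw [hsum w]
      have hg : ∀ g : V' → Bool, (∑ b, w (e (g, b))) = w' g := by
        intro g
        rw [Fintype.sum_bool, hweval, hweval, ← mul_add, hksum, mul_one]
      rw [Finset.sum_congr rfl fun g _ => hg g]
      exact hw1
    have hsplit : ∀ c : Bool, (∑ g : V' → Bool, w' g * kk (g m') c) = r true c + r false c := by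
      intro c
      rw [← Finset.sum_filter_add_sum_filter_not univ (fun g : V' → Bool => g m' = true)]
      have e1 : ∑ g ∈ univ.filter (fun g : V' → Bool => g m' = true), w' g * kk (g m') c
          = (∑ g ∈ univ.filter (fun g : V' → Bool => g m' = true), w' g) * kk true c := by
        rw [Finset.sum_mul]
        exact Finset.sum_congr rfl fun g hg => by rw [(Finset.mem_filter.mp hg).2]
      have e0 : ∑ g ∈ univ.filter (fun g : V' → Bool => ¬(g m' = true)), w' g * kk (g m') c
          = (∑ g ∈ univ.filter (fun g : V' → Bool => ¬(g m' = true)), w' g) * kk false c := by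
        rw [Finset.sum_mul]
        refine Finset.sum_congr rfl fun g hg => ?_
        have := (Finset.mem_filter.mp hg).2
        rw [Bool.not_eq_true] at this
        rw [this]
      rw [e1, e0, S1, S0, tT c, tF c]
    have hvert : ∀ i, ∑ f ∈ univ.filter (fun f : V → Bool => f i = true), w f = p i := by
      intro i
      rcases eq_or_ne i l with hi | hi
      · rw [hi]
        calc ∑ f ∈ univ.filter (fun f : V → Bool => f l = true), w f
            = ∑ f : V → Bool, if f l = true then w f else 0 := Finset.sum_filter _ _
          _ = ∑ g : V' → Bool, ∑ b : Bool, if e (g, b) l = true then w (e (g, b)) else 0 :=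
              hsum _
          _ = ∑ g : V' → Bool, w' g * kk (g m') true := by
              refine Finset.sum_congr rfl fun g _ => ?_
              rw [Fintype.sum_bool, hevall, hevall, hweval, hweval]
              simp
          _ = r true true + r false true := hsplit true
          _ = p l := by rw [rTT, rFT]; ring
      · calc ∑ f ∈ univ.filter (fun f : V → Bool => f i = true), w f
            = ∑ f : V → Bool, if f i = true then w f else 0 := Finset.sum_filter _ _
          _ = ∑ g : V' → Bool, ∑ b : Bool, if e (g, b) i = true then w (e (g, b)) else 0 :=
              hsum _
          _ = ∑ g : V' → Bool, if g ⟨i, hi⟩ = true then w' g else 0 := by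
              refine Finset.sum_congr rfl fun g _ => ?_
              rw [Fintype.sum_bool, heval g true i hi, heval g false i hi, hweval, hweval]
              by_cases hgi : g ⟨i, hi⟩ = true
              · rw [if_pos hgi, if_pos hgi, if_pos hgi, ← mul_add, hksum, mul_one]
              · rw [if_neg hgi, if_neg hgi, if_neg hgi, add_zero]
          _ = ∑ g ∈ univ.filter (fun g : V' → Bool => g ⟨i, hi⟩ = true), w' g :=
              (Finset.sum_filter _ _).symm
          _ = p i := hwv ⟨i, hi⟩
    have hedgeml : ∑ f ∈ univ.filter (fun f : V → Bool => f m = true ∧ f l = true), w f = qe := by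
      calc ∑ f ∈ univ.filter (fun f : V → Bool => f m = true ∧ f l = true), w f
          = ∑ f : V → Bool, if f m = true ∧ f l = true then w f else 0 := Finset.sum_filter _ _
        _ = ∑ g : V' → Bool, ∑ b : Bool,
              if e (g, b) m = true ∧ e (g, b) l = true then w (e (g, b)) else 0 := hsum _
        _ = ∑ g : V' → Bool, if g m' = true then w' g * kk (g m') true else 0 := by
            refine Finset.sum_congr rfl fun g _ => ?_
            rw [Fintype.sum_bool, heval g true m hml, heval g false m hml, hevall, hevall,
              hweval, hweval]
            by_cases hgm : g m' = true <;> simp [hgm, ← hm'def]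
        _ = ∑ g ∈ univ.filter (fun g : V' → Bool => g m' = true), w' g * kk (g m') true :=
            (Finset.sum_filter _ _).symm
        _ = (∑ g ∈ univ.filter (fun g : V' → Bool => g m' = true), w' g) * kk true true := by
            rw [Finset.sum_mul]
            exact Finset.sum_congr rfl fun g hg => by rw [(Finset.mem_filter.mp hg).2]
        _ = qe := by rw [S1, tT true, rTT]
    have hedge' : ∀ (i j : V), T.Adj i j → ∀ (hi : i ≠ l) (hj : j ≠ l),
        ∑ f ∈ univ.filter (fun f : V → Bool => f i = true ∧ f j = true), w f = q s(i, j) := by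
      intro i j hadj hi hj
      have hadj' : T'.Adj ⟨i, hi⟩ ⟨j, hj⟩ := hadj
      calc ∑ f ∈ univ.filter (fun f : V → Bool => f i = true ∧ f j = true), w f
          = ∑ f : V → Bool, if f i = true ∧ f j = true then w f else 0 := Finset.sum_filter _ _
        _ = ∑ g : V' → Bool, ∑ b : Bool,
              if e (g, b) i = true ∧ e (g, b) j = true then w (e (g, b)) else 0 := hsum _
        _ = ∑ g : V' → Bool, if g ⟨i, hi⟩ = true ∧ g ⟨j, hj⟩ = true then w' g else 0 := by
            refine Finset.sum_congr rfl fun g _ => ?_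
            rw [Fintype.sum_bool, heval g true i hi, heval g false i hi,
              heval g true j hj, heval g false j hj, hweval, hweval]
            by_cases hgi : g ⟨i, hi⟩ = true ∧ g ⟨j, hj⟩ = true
            · rw [if_pos hgi, if_pos hgi, ← mul_add, hksum, mul_one, if_pos hgi]
            · rw [if_neg hgi, if_neg hgi, add_zero, if_neg hgi]
        _ = ∑ g ∈ univ.filter (fun g : V' → Bool => g ⟨i, hi⟩ = true ∧ g ⟨j, hj⟩ = true), w' g :=
            (Finset.sum_filter _ _).symm
        _ = q' s(⟨i, hi⟩, ⟨j, hj⟩) := hwe ⟨i, hi⟩ ⟨j, hj⟩ hadj'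
        _ = q s(i, j) := by rw [hq'def]; simp [Sym2.map_pair_eq]
    refine ⟨w, fun f => mul_nonneg (hw0 _) (hk0 _ _), htot, hvert, ?_⟩
    intro i j hadj
    rcases eq_or_ne i l with hi | hi
    · rw [hi] at hadj ⊢
      have hj : j = m := huniq j hadj
      rw [hj]
      have hfil : univ.filter (fun f : V → Bool => f l = true ∧ f m = true)
          = univ.filter (fun f : V → Bool => f m = true ∧ f l = true) := by
        apply Finset.filter_congr
        intro x _
        exact and_comm
      rw [hfil, hedgeml, hqedef, Sym2.eq_swap]
    · rcases eq_or_ne j l with hj | hj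
      · rw [hj] at hadj ⊢
        have hi2 : i = m := huniq i hadj.symm
        rw [hi2, hedgeml, hqedef]
      · exact hedge' i j hadj hi hj


end TreeProof

open MeasureTheory

theorem stmt_1 {V : Type*} [Fintype V] (T : SimpleGraph V) (hT : T.IsTree)
    (p : V → ℝ) (hp : ∀ i, 0 ≤ p i ∧ p i ≤ 1) (q : Sym2 V → ℝ)
    (hq : ∀ i j, T.Adj i j →
      max 0 (p i + p j - 1) ≤ q s(i, j) ∧ q s(i, j) ≤ min (p i) (p j)) :
    ∃ μ : Measure (V → Bool), IsProbabilityMeasure μ ∧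
      (∀ i, μ {f | f i = true} = ENNReal.ofReal (p i)) ∧
      (∀ i j, T.Adj i j →
        μ {f | f i = true ∧ f j = true} = ENNReal.ofReal (q s(i, j))) := by
  classical
  obtain ⟨w, hw0, hw1, hwv, hwe⟩ := TreeProof.key (Fintype.card V) V T rfl hT p hp q hq
  set μ : Measure (V → Bool) :=
    ∑ f : V → Bool, (ENNReal.ofReal (w f)) • Measure.dirac f with hμdef
  have hμ : ∀ S : Set (V → Bool), MeasurableSet S →
      μ S = ENNReal.ofReal (∑ f ∈ Finset.univ.filter (fun f => f ∈ S), w f) := by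
    intro S hS
    rw [hμdef]
    rw [MeasureTheory.Measure.coe_finset_sum]
    rw [Finset.sum_apply]
    have : ∀ f : V → Bool, ((ENNReal.ofReal (w f)) • Measure.dirac f) S
        = if f ∈ S then ENNReal.ofReal (w f) else 0 := by
      intro f
      rw [MeasureTheory.Measure.smul_apply, MeasureTheory.Measure.dirac_apply' _ hS,
        smul_eq_mul, Set.indicator_apply]
      by_cases h : f ∈ S <;> simp [h]
    rw [Finset.sum_congr rfl fun f _ => this f, ← Finset.sum_filter,
      ← ENNReal.ofReal_sum_of_nonneg fun f _ => hw0 f]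
  have hS1 : ∀ i : V, MeasurableSet {f : V → Bool | f i = true} := by
    intro i
    have h : {f : V → Bool | f i = true} = (fun f : V → Bool => f i) ⁻¹' {true} := rfl
    rw [h]
    exact measurable_pi_apply i (measurableSet_singleton true)
  refine ⟨μ, ⟨?_⟩, ?_, ?_⟩
  · rw [hμ Set.univ MeasurableSet.univ]
    simp only [Set.mem_univ, Finset.filter_true]
    rw [hw1]
    exact ENNReal.ofReal_one
  · intro i
    rw [hμ _ (hS1 i)]
    congr 1
    rw [← hwv i]
    apply Finset.sum_congr _ (fun _ _ => rfl)
    ext f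
    simp [Set.mem_setOf_eq]
  · intro i j hadj
    have hms : MeasurableSet {f : V → Bool | f i = true ∧ f j = true} :=
      (hS1 i).inter (hS1 j)
    rw [hμ _ hms]
    congr 1
    rw [← hwe i j hadj]
    apply Finset.sum_congr _ (fun _ _ => rfl)
    ext f
    simp [Set.mem_setOf_eq]
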